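/- For a connected undirected graph G on n vertices with diameter D, the algebraic connectivity (second-smallest eigenvalue of the graph Laplacian) satisfies λ_2(G) ≥ 4/(D·n). -/

import Mathlib

open Matrix

private lemma walk_telescope {V : Type*} {G : SimpleGraph V} (v : V → ℝ) {a b : V}
    (p : G.Walk a b) :
    (p.darts.map (fun d => v d.toProd.1 - v d.toProd.2)).sum = v a - v b := by
  induction p with
  | nil => simp
  | cons h q ih =>
    simp only [SimpleGraph.Walk.darts_cons, List.map_cons, List.sum_cons, ih]
    ring

/-- Mohar/McKay: the algebraic connectivity of a connected graph
on n vertices with diameter D is at least 4/(D·n), stated variationally: for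
every mean-zero vector v, the Laplacian quadratic form dominates
(4/(D·n))·‖v‖². -/
theorem algebraic_connectivity_lower_bound
    {V : Type*} [Fintype V] [DecidableEq V]
    (G : SimpleGraph V) [DecidableRel G.Adj] (hconn : G.Connected)
    (v : V → ℝ) (hv : ∑ i, v i = 0) :
    4 / ((G.diam : ℝ) * (Fintype.card V : ℝ)) * ∑ i, v i ^ 2 ≤
      v ⬝ᵥ (G.lapMatrix ℝ).mulVec v := by
  classical
  set Q : ℝ := v ⬝ᵥ (G.lapMatrix ℝ).mulVec v with hQdef
  have hQform : Q = (∑ i : V, ∑ j : V, if G.Adj i j then (v i - v j) ^ 2 else 0) / 2 := by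
    rw [hQdef, ← Matrix.toLinearMap₂'_apply', SimpleGraph.lapMatrix_toLinearMap₂']
  have hQ0 : 0 ≤ Q := by rw [hQform]; positivity
  rcases subsingleton_or_nontrivial V with hs | hs
  · have hd : G.diam = 0 := by
      have := SimpleGraph.ediam_eq_zero_of_subsingleton (G := G)
      simp [SimpleGraph.diam, this]
    rw [hd]
    simpa using hQ0
  -- nontrivial case
  have hnV : Nonempty V := hconn.nonempty
  have hne : G.ediam ≠ ⊤ := by
    have h1 : G.ediam ≤ (Fintype.card V : ℕ∞) := by
      refine SimpleGraph.ediam_le_of_edist_le fun a b => ?_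
      obtain ⟨p, hp, -⟩ := hconn.exists_path_of_dist a b
      calc G.edist a b ≤ (p.length : ℕ∞) := SimpleGraph.edist_le p
        _ ≤ (Fintype.card V : ℕ∞) := by exact_mod_cast hp.length_lt.le
    exact ne_top_of_le_ne_top (by simp) h1
  have hD : 0 < G.diam := by
    rcases Nat.eq_zero_or_pos G.diam with h | h
    · rcases SimpleGraph.diam_eq_zero.mp h with h' | h'
      · exact absurd h' hne
      · exact absurd h' (not_subsingleton V)
    · exact h
  have hn : 0 < Fintype.card V := Fintype.card_pos
  obtain ⟨u, -, hu⟩ := Finset.exists_max_image Finset.univ v ⟨Classical.arbitrary V, Finset.mem_univ _⟩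
  obtain ⟨w, -, hw⟩ := Finset.exists_min_image Finset.univ v ⟨Classical.arbitrary V, Finset.mem_univ _⟩
  have hu' : ∀ i, v i ≤ v u := fun i => hu i (Finset.mem_univ i)
  have hw' : ∀ i, v w ≤ v i := fun i => hw i (Finset.mem_univ i)
  obtain ⟨p, hp, hlen⟩ := hconn.exists_path_of_dist u w
  set f : G.Dart → ℝ := fun d => v d.toProd.1 - v d.toProd.2 with hf
  have hedges : p.edges = p.darts.map SimpleGraph.Dart.edge := rfl
  have hdn : p.darts.Nodup := by
    have := hp.edges_nodup
    rw [hedges] at this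
    exact this.of_map _
  set s : Finset G.Dart := p.darts.toFinset with hsdef
  have hcard : s.card = p.length := by
    rw [hsdef, List.toFinset_card_of_nodup hdn, SimpleGraph.Walk.length_darts]
  have htel : ∑ d ∈ s, f d = v u - v w := by
    rw [hsdef, List.sum_toFinset _ hdn, walk_telescope]
  -- Cauchy–Schwarz along the path
  have hCS : (v u - v w) ^ 2 ≤ (p.length : ℝ) * ∑ d ∈ s, f d ^ 2 := by
    have := sq_sum_le_card_mul_sum_sq (s := s) (f := f)
    rw [htel, hcard] at this
    exact this
  -- the path energy is at most Q
  set h : V × V → ℝ := fun q => if G.Adj q.1 q.2 then (v q.1 - v q.2) ^ 2 else 0 with hh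
  have hhnn : ∀ q : V × V, 0 ≤ h q := by
    intro q; rw [hh]; dsimp only; split <;> positivity
  have hhsym : ∀ q : V × V, h q.swap = h q := by
    intro q
    rw [hh]; dsimp only [Prod.swap]
    by_cases hq : G.Adj q.1 q.2
    · rw [if_pos (G.adj_symm hq), if_pos hq]; ring
    · rw [if_neg (fun hc => hq (G.adj_symm hc)), if_neg hq]
  set T : Finset (V × V) := s.image SimpleGraph.Dart.toProd with hT
  have hinj : Set.InjOn SimpleGraph.Dart.toProd (s : Set G.Dart) :=
    fun d _ e _ hde => SimpleGraph.Dart.ext d e hde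
  have hsum_T : ∑ d ∈ s, f d ^ 2 = ∑ q ∈ T, h q := by
    rw [hT, Finset.sum_image (fun d hd e he hde => SimpleGraph.Dart.ext d e hde)]
    refine Finset.sum_congr rfl fun d _ => ?_
    rw [hh, hf]; dsimp only
    rw [if_pos d.adj]
  set T' : Finset (V × V) := T.image Prod.swap with hT'
  have hsum_T' : ∑ q ∈ T', h q = ∑ q ∈ T, h q := by
    rw [hT', Finset.sum_image (fun a _ b _ hab => Prod.swap_injective hab)]
    exact Finset.sum_congr rfl fun q _ => hhsym q
  have hdisj : Disjoint T T' := by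
    rw [Finset.disjoint_left]
    rintro q hqT hqT'
    rw [hT', Finset.mem_image] at hqT'
    obtain ⟨q', hq'T, hq's⟩ := hqT'
    rw [hT, Finset.mem_image] at hqT hq'T
    obtain ⟨d, hds, hdq⟩ := hqT
    obtain ⟨e, hes, heq⟩ := hq'T
    have hde : d.edge = e.edge := by
      rw [SimpleGraph.Dart.edge, SimpleGraph.Dart.edge]
      have : d.toProd = e.toProd.swap := by rw [hdq, ← hq's, heq]
      rw [this]
      exact Sym2.mk_prod_swap_eq
    have hdmem : d ∈ p.darts := by rw [hsdef] at hds; exact List.mem_toFinset.mp hds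
    have hemem : e ∈ p.darts := by rw [hsdef] at hes; exact List.mem_toFinset.mp hes
    have : d = e := by
      have hnodup := hp.edges_nodup
      rw [hedges] at hnodup
      exact List.inj_on_of_nodup_map hnodup hdmem hemem hde
    subst this
    have h12 : d.toProd.1 = d.toProd.2 := by
      conv_lhs => rw [hdq, ← hq's]
      rw [Prod.fst_swap, ← heq]
    exact G.irrefl (h12 ▸ d.adj)
  have hTQ : ∑ q ∈ T, h q ≤ Q := by
    have hunion : ∑ q ∈ T, h q + ∑ q ∈ T', h q = ∑ q ∈ T ∪ T', h q :=
      (Finset.sum_union hdisj).symm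
    have hle : ∑ q ∈ T ∪ T', h q ≤ ∑ q : V × V, h q :=
      Finset.sum_le_sum_of_subset_of_nonneg (Finset.subset_univ _)
        (fun q _ _ => hhnn q)
    have huniv : ∑ q : V × V, h q = 2 * Q := by
      rw [hQform]
      rw [← Finset.univ_product_univ, Finset.sum_product]
      ring
    have : 2 * ∑ q ∈ T, h q ≤ 2 * Q := by
      calc 2 * ∑ q ∈ T, h q = ∑ q ∈ T, h q + ∑ q ∈ T', h q := by rw [hsum_T']; ring
        _ ≤ 2 * Q := hunion ▸ (huniv ▸ hle)
    linarith
  -- combine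
  have hlenD : (p.length : ℝ) ≤ (G.diam : ℝ) := by
    have := SimpleGraph.dist_le_diam (G := G) hne (u := u) (v := w)
    exact_mod_cast hlen ▸ this
  have key2 : (v u - v w) ^ 2 ≤ (G.diam : ℝ) * Q := by
    calc (v u - v w) ^ 2 ≤ (p.length : ℝ) * ∑ d ∈ s, f d ^ 2 := hCS
      _ ≤ (G.diam : ℝ) * Q := by
          rw [hsum_T]
          exact mul_le_mul hlenD hTQ (Finset.sum_nonneg fun q _ => hhnn q)
            (Nat.cast_nonneg _)
  have key1 : ∑ i, v i ^ 2 ≤ (Fintype.card V : ℝ) * ((v u - v w) ^ 2 / 4) := by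
    have h1 : ∀ i, v i ^ 2 ≤ v i * (v u + v w) - v u * v w := by
      intro i
      nlinarith [mul_nonneg (sub_nonneg.2 (hw' i)) (sub_nonneg.2 (hu' i))]
    have h2 : ∑ i, v i ^ 2 ≤ -(Fintype.card V : ℝ) * (v u * v w) := by
      calc ∑ i, v i ^ 2 ≤ ∑ i, (v i * (v u + v w) - v u * v w) :=
            Finset.sum_le_sum fun i _ => h1 i
        _ = (∑ i, v i) * (v u + v w) - (Fintype.card V : ℝ) * (v u * v w) := by
            rw [Finset.sum_sub_distrib, ← Finset.sum_mul, Finset.sum_const,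
              Finset.card_univ, nsmul_eq_mul]
        _ = -(Fintype.card V : ℝ) * (v u * v w) := by rw [hv]; ring
    nlinarith [sq_nonneg (v u + v w), (Nat.cast_pos.mpr hn : (0:ℝ) < Fintype.card V)]
  have hDpos : (0:ℝ) < (G.diam : ℝ) := by exact_mod_cast hD
  have hnpos : (0:ℝ) < (Fintype.card V : ℝ) := by exact_mod_cast hn
  rw [div_mul_eq_mul_div, div_le_iff₀ (by positivity)]
  have h3 : (Fintype.card V : ℝ) * ((v u - v w) ^ 2 / 4) ≤
      (Fintype.card V : ℝ) * ((G.diam : ℝ) * Q / 4) := by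
    apply mul_le_mul_of_nonneg_left _ hnpos.le
    linarith
  nlinarith [key1]
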